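/- For d ≥ 0 let a(d) be the number of closed Mockingbird terms of degree d that are maximal elements for ≼ (i.e., the only term t' with t ⇒ t' is t itself). Then a(0) = 1, a(1) = 1, and for all d ≥ 2, a(d) = Σ_{i=0}^{d−2} a(i)·a(d−1−i). -/

import Mathlib

/-- Mockingbird terms: the constant `M`, variables `x i`, and applications. -/
inductive MTerm : Type
  | M : MTerm
  | var : ℕ → MTerm
  | app : MTerm → MTerm → MTerm
  deriving DecidableEq

/-- The one-step rewrite relation `⇒` on Mockingbird terms. -/
inductive Step : MTerm → MTerm → Prop
  | mock (t : MTerm) : Step (MTerm.app MTerm.M t) (MTerm.app t t)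
  | left {t1 t1' : MTerm} (t2 : MTerm) :
      Step t1 t1' → Step (MTerm.app t1 t2) (MTerm.app t1' t2)
  | right (t1 : MTerm) {t2 t2' : MTerm} :
      Step t2 t2' → Step (MTerm.app t1 t2) (MTerm.app t1 t2')

/-- `≼`, the reflexive-transitive closure of `⇒`. -/
def MLe : MTerm → MTerm → Prop := Relation.ReflTransGen Step

/-- `≡`, the reflexive-symmetric-transitive closure of `⇒`. -/
def MEquiv : MTerm → MTerm → Prop := Relation.EqvGen Step

/-- Strict version of `≼`. -/
def MLt (s t : MTerm) : Prop := MLe s t ∧ s ≠ t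

/-- Covering relation for `≼`. -/
def MCovBy (s t : MTerm) : Prop := MLt s t ∧ ∀ z, MLt s z → ¬ MLt z t

/-- Duplicative trees: white or black nodes with a list (forest) of children. -/
inductive DTree : Type
  | W : List DTree → DTree
  | B : List DTree → DTree

/-- The one-step relation `⋖` on duplicative forests. -/
inductive DStep : List DTree → List DTree → Prop
  | dup (g : List DTree) : DStep [DTree.W g] [DTree.B (g ++ g)]
  | white {g g' : List DTree} : DStep g g' → DStep [DTree.W g] [DTree.W g']
  | black {g g' : List DTree} : DStep g g' → DStep [DTree.B g] [DTree.B g']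
  | head {t t' : DTree} (f : List DTree) : DStep [t] [t'] → DStep (t :: f) (t' :: f)
  | tail (t : DTree) {f f' : List DTree} : DStep f f' → DStep (t :: f) (t :: f')

/-- `≪`, the reflexive-transitive closure of `⋖`. -/
def DLe : List DTree → List DTree → Prop := Relation.ReflTransGen DStep

/-- The map `fr` from Mockingbird terms to duplicative forests. -/
def fr : MTerm → List DTree
  | MTerm.M => []
  | MTerm.var _ => []
  | MTerm.app MTerm.M MTerm.M => [DTree.B []]
  | MTerm.app MTerm.M t' => [DTree.W (fr t')]
  | MTerm.app t t' => [DTree.B (fr t ++ fr t')]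

mutual
  /-- The pruning map on duplicative trees (returns a forest). -/
  def prT : DTree → List DTree
    | DTree.W g => [DTree.W (prF g)]
    | DTree.B g => prF g
  /-- The pruning map on duplicative forests. -/
  def prF : List DTree → List DTree
    | [] => []
    | t :: f => prT t ++ prF f
end

mutual
  /-- The statistic `mtStat` on duplicative trees. -/
  def mtStat : DTree → ℕ
    | DTree.W g => 2 * ml g
    | DTree.B g => ml g
  /-- Sum of `mtStat` over the trees of a forest. -/
  def mtsum : List DTree → ℕ
    | [] => 0
    | t :: f => mtStat t + mtsum f
  /-- The statistic `ml` on duplicative forests: `1 - ℓ + Σ mtStat`. -/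
  def ml : List DTree → ℕ
    | f => mtsum f + 1 - f.length
end

mutual
  /-- Number of white nodes in a duplicative tree. -/
  def whitesT : DTree → ℕ
    | DTree.W g => 1 + whitesF g
    | DTree.B g => whitesF g
  /-- Number of white nodes in a duplicative forest. -/
  def whitesF : List DTree → ℕ
    | [] => 0
    | t :: f => whitesT t + whitesF f
end

/-- Closed terms: no variables. -/
def MClosed : MTerm → Prop
  | MTerm.M => True
  | MTerm.var _ => False
  | MTerm.app a b => MClosed a ∧ MClosed b

/-- Degree: number of applications. -/
def deg : MTerm → ℕ
  | MTerm.M => 0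
  | MTerm.var _ => 0
  | MTerm.app a b => deg a + deg b + 1

/-- Subterm relation. -/
inductive Subterm : MTerm → MTerm → Prop
  | refl (t : MTerm) : Subterm t t
  | left {s a : MTerm} (b : MTerm) : Subterm s a → Subterm s (MTerm.app a b)
  | right (a : MTerm) {s b : MTerm} : Subterm s b → Subterm s (MTerm.app a b)

/-- The term `r_d`. -/
def rTerm : ℕ → MTerm
  | 0 => MTerm.M
  | d + 1 => MTerm.app MTerm.M (rTerm d)

/-- Saturated chain from `a` to `b`, given as the list of its elements. -/
def SatChain (a b : MTerm) (c : List MTerm) : Prop :=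
  List.Chain' MCovBy c ∧ c.head? = some a ∧ c.getLast? = some b

/-- Auxiliary: maximality predicate. -/
def MMax (t : MTerm) : Prop := ∀ t', Step t t' → t' = t

lemma mmax_M : MMax MTerm.M := fun t' h => by cases h

lemma mmax_app {u v : MTerm} :
    MMax (MTerm.app u v) ↔ MMax u ∧ MMax v ∧ (u = MTerm.M → v = MTerm.M) := by
  constructor
  · intro h
    refine ⟨fun u' hu => ?_, fun v' hv => ?_, fun hu => ?_⟩
    · have := h _ (Step.left v hu); injection this
    · have := h _ (Step.right u hv); injection this
    · subst hu
      have := h _ (Step.mock v); injection this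
  · rintro ⟨h1, h2, h3⟩ t' hs
    cases hs with
    | mock t => rw [h3 rfl]
    | left _ h => rw [h1 _ h]
    | right _ h => rw [h2 _ h]

lemma closed_deg_zero {t : MTerm} (hc : MClosed t) (hd : deg t = 0) :
    t = MTerm.M := by
  cases t with
  | M => rfl
  | var n => exact absurd hc id
  | app a b => simp [deg] at hd

/-- Finset of maximal closed terms of degree `d`. -/
def MaxF : ℕ → Finset MTerm
  | 0 => {MTerm.M}
  | 1 => {MTerm.app MTerm.M MTerm.M}
  | (d+2) => (Finset.range (d+1)).biUnion fun i =>
      ((MaxF (min (i+1) (d+1))) ×ˢ (MaxF (d - i))).image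
        fun p => MTerm.app p.1 p.2
  decreasing_by all_goals omega

lemma MaxF_spec : ∀ d t, t ∈ MaxF d ↔ MClosed t ∧ deg t = d ∧ MMax t := by
  intro d
  induction d using Nat.strong_induction_on with
  | _ d ih =>
    match d with
    | 0 =>
      intro t
      simp only [MaxF, Finset.mem_singleton]
      constructor
      · rintro rfl; exact ⟨trivial, rfl, mmax_M⟩
      · rintro ⟨hc, hd, _⟩; exact closed_deg_zero hc hd
    | 1 =>
      intro t
      simp only [MaxF, Finset.mem_singleton]
      constructor
      · rintro rfl
        refine ⟨⟨trivial, trivial⟩, rfl, ?_⟩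
        rw [mmax_app]; exact ⟨mmax_M, mmax_M, fun _ => rfl⟩
      · rintro ⟨hc, hd, _⟩
        cases t with
        | M => simp [deg] at hd
        | var n => exact absurd hc id
        | app u v =>
          simp only [deg] at hd
          have hu : deg u = 0 := by omega
          have hv : deg v = 0 := by omega
          rw [closed_deg_zero hc.1 hu, closed_deg_zero hc.2 hv]
    | (d+2) =>
      intro t
      simp only [MaxF, Finset.mem_biUnion, Finset.mem_image, Finset.mem_product,
        Finset.mem_range, Prod.exists]
      constructor
      · rintro ⟨i, hi, u, v, ⟨hu, hv⟩, rfl⟩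
        rw [min_eq_left (by omega : i + 1 ≤ d + 1)] at hu
        rw [ih (i+1) (by omega) u] at hu
        rw [ih (d-i) (by omega) v] at hv
        obtain ⟨hcu, hdu, hmu⟩ := hu
        obtain ⟨hcv, hdv, hmv⟩ := hv
        refine ⟨⟨hcu, hcv⟩, by simp [deg]; omega, ?_⟩
        rw [mmax_app]
        refine ⟨hmu, hmv, fun h => ?_⟩
        subst h; simp [deg] at hdu
      · rintro ⟨hc, hd, hm⟩
        cases t with
        | M => simp [deg] at hd
        | var n => exact absurd hc id
        | app u v =>
          rw [mmax_app] at hm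
          obtain ⟨hmu, hmv, himp⟩ := hm
          simp only [deg] at hd
          have huM : u ≠ MTerm.M := by
            rintro rfl
            rw [himp rfl] at hd
            simp [deg] at hd
          have hdu : deg u ≠ 0 := fun h => huM (closed_deg_zero hc.1 h)
          refine ⟨deg u - 1, by omega, u, v, ⟨?_, ?_⟩, rfl⟩
          · rw [min_eq_left (by omega : deg u - 1 + 1 ≤ d + 1),
              ih (deg u - 1 + 1) (by omega) u]
            exact ⟨hc.1, by omega, hmu⟩
          · rw [ih (d - (deg u - 1)) (by omega) v]
            exact ⟨hc.2, by omega, hmv⟩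

lemma MaxF_card_rec (d : ℕ) :
    (MaxF (d+2)).card =
      ∑ i ∈ Finset.range (d+1), (MaxF (i+1)).card * (MaxF (d-i)).card := by
  rw [MaxF, Finset.card_biUnion]
  · refine Finset.sum_congr rfl fun i hi => ?_
    rw [Finset.mem_range] at hi
    rw [min_eq_left (by omega : i + 1 ≤ d + 1)]
    rw [Finset.card_image_of_injective _ ?_, Finset.card_product]
    rintro ⟨u, v⟩ ⟨u', v'⟩ h
    simp only at h
    injection h with h1 h2
    simp [h1, h2]
  · intro i hi j hj hij
    rw [Finset.mem_coe, Finset.mem_range] at hi hj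
    simp only [Function.onFun, Finset.disjoint_left, Finset.mem_image, Finset.mem_product,
      Prod.exists]
    rintro t ⟨u, v, ⟨hu, _⟩, rfl⟩ ⟨u', v', ⟨hu', _⟩, heq⟩
    injection heq with h1 h2
    rw [min_eq_left (by omega : i + 1 ≤ d + 1)] at hu
    rw [min_eq_left (by omega : j + 1 ≤ d + 1)] at hu'
    have ha1 := ((MaxF_spec (i+1) u).mp hu).2.1
    have ha2 := ((MaxF_spec (j+1) u').mp hu').2.1
    rw [h1] at ha2
    omega

lemma maxset_eq (d : ℕ) :
    {t : MTerm | MClosed t ∧ deg t = d ∧ ∀ t', Step t t' → t' = t} =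
      ↑(MaxF d) := by
  ext t
  simp only [Set.mem_setOf_eq, Finset.coe_sort_coe, Finset.mem_coe,
    MaxF_spec d t]
  rfl

lemma a_eq_card {a : ℕ → ℕ}
    (ha : ∀ d, a d =
      Set.ncard {t : MTerm | MClosed t ∧ deg t = d ∧ ∀ t', Step t t' → t' = t})
    (d : ℕ) : a d = (MaxF d).card := by
  rw [ha d, maxset_eq d, Set.ncard_coe_finset]

/-- recurrence for the number `a d` of closed maximal terms of degree `d`. -/
theorem count_maximal_closed_terms (a : ℕ → ℕ)
    (ha : ∀ d, a d =
      Set.ncard {t : MTerm | MClosed t ∧ deg t = d ∧ ∀ t', Step t t' → t' = t}) :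
    a 0 = 1 ∧ a 1 = 1 ∧
    ∀ d, 2 ≤ d → a d = ∑ i ∈ Finset.range (d - 1), a i * a (d - 1 - i) := by
  refine ⟨by rw [a_eq_card ha 0]; simp [MaxF], by rw [a_eq_card ha 1]; simp [MaxF], ?_⟩
  intro d hd
  obtain ⟨m, rfl⟩ : ∃ m, d = m + 2 := ⟨d - 2, by omega⟩
  rw [a_eq_card ha, MaxF_card_rec]
  have : (m + 2 - 1 : ℕ) = m + 1 := by omega
  rw [this]
  rw [← Finset.sum_range_reflect
    (fun i => (MaxF (i+1)).card * (MaxF (m-i)).card) (m+1)]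
  refine Finset.sum_congr rfl fun i hi => ?_
  rw [Finset.mem_range] at hi
  rw [a_eq_card ha, a_eq_card ha,
    show m + 1 - 1 - i = m - i by omega, show m - (m - i) = i by omega,
    show m - i + 1 = m + 1 - i by omega, mul_comm]
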